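/- The parameter count of the CNN implementation of MNN-H^2 grows logarithmically in N: with r, m, K, n_b fixed and N = 2^L m, one has N_{p,CNN} ≤ C log₂(N) for a constant C = m²(4 + K(2n_b+1)) depending only on m, K, n_b, for all L ≥ 3. -/

import Mathlib

open Finset

/-- the CNN parameter count of MNN-H^2 grows logarithmically in
`N = 2^L m`: it is bounded by `C log₂ N` with `C = m^2 (4 + K (2 n_b + 1))`. -/
theorem mnn_h2_cnn_param_log_bound (L m r N K nb : ℕ) (hL : 3 ≤ L) (hm : 1 ≤ m)
    (hr : 1 ≤ r) (hrm : r ≤ m) (hN : N = 2 ^ L * m) (hK : 1 ≤ K) (hnb : 1 ≤ nb)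
    (nbad : ℕ) (hnbad : nbad ≤ nb) (nbl : ℕ → ℕ) (hnbl : ∀ ℓ ∈ Icc 2 L, nbl ℓ ≤ nb) :
    (N / 2 ^ L) * r + 4 * (L - 3 + 1) * r ^ 2
      + K * (∑ ℓ ∈ Icc 2 L, r ^ 2 * (2 * nbl ℓ + 1)) + r * m + m ^ 2 * K * (2 * nbad + 1)
      ≤ m ^ 2 * (4 + K * (2 * nb + 1)) * Nat.log 2 N := by
  subst hN
  rw [Nat.mul_div_cancel_left m (pow_pos two_pos L)]
  have hlog : L ≤ Nat.log 2 (2 ^ L * m) := by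
    rw [Nat.le_log_iff_pow_le one_lt_two (by positivity)]
    exact Nat.le_mul_of_pos_right _ hm
  have hrm2 : r ^ 2 ≤ m ^ 2 := Nat.pow_le_pow_left hrm 2
  have hsum : ∑ ℓ ∈ Icc 2 L, r ^ 2 * (2 * nbl ℓ + 1) ≤ (L - 1) * (m ^ 2 * (2 * nb + 1)) := by
    calc ∑ ℓ ∈ Icc 2 L, r ^ 2 * (2 * nbl ℓ + 1)
        ≤ ∑ _ℓ ∈ Icc 2 L, m ^ 2 * (2 * nb + 1) := Finset.sum_le_sum (fun ℓ hℓ => by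
          have := hnbl ℓ hℓ
          exact Nat.mul_le_mul hrm2 (by omega))
      _ = (L - 1) * (m ^ 2 * (2 * nb + 1)) := by
          rw [Finset.sum_const, smul_eq_mul, Nat.card_Icc]
          congr 1
  set Q := Nat.log 2 (2 ^ L * m) with hQ
  obtain ⟨t, rfl⟩ : ∃ t, L = t + 3 := ⟨L - 3, by omega⟩
  have ht : t + 3 - 3 + 1 = t + 1 := by omega
  rw [ht]
  have h1 : m * r ≤ m ^ 2 := by nlinarith
  have h2 : K * (∑ ℓ ∈ Icc 2 (t + 3), r ^ 2 * (2 * nbl ℓ + 1))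
      ≤ K * ((t + 2) * (m ^ 2 * (2 * nb + 1))) := by
    apply Nat.mul_le_mul_left
    simpa using hsum
  have h3 : m ^ 2 * K * (2 * nbad + 1) ≤ m ^ 2 * K * (2 * nb + 1) := by
    apply Nat.mul_le_mul_left; omega
  have hQ3 : t + 3 ≤ Q := hlog
  nlinarith [Nat.mul_le_mul_left (4 * (t + 1)) hrm2, h1, h2, h3,
    Nat.mul_le_mul_right (m ^ 2 * (4 + K * (2 * nb + 1))) hQ3]
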